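/- Let ζ₁,…,ζₙ be distinct complex numbers with positive imaginary parts, and let u₁,…,uₙ ∈ ℂ^m. Define the n×n Hermitian matrix D by D_{jk} = (i/(ζ_k - ζ_j*))·⟨u_j, u_k⟩. If the vectors u₁,…,uₙ are all nonzero, then for every nonzero y ∈ ℂⁿ, the quadratic form ∑_{j,k} D_{jk} y_j ȳ_k equals ∫₀^∞ ‖∑_j e^{-i ζ_j* z} y_j u_j‖² dz, and in particular D is positive definite provided the functions z ↦ e^{-i ζ_j* z} u_j are linearly independent on (0,∞). -/

import Mathlib

open Complex Matrix BigOperators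
open scoped ComplexOrder

noncomputable section

/-- Hermitian inner product on ℂ^m, linear in the first slot. -/
def herm {m : ℕ} (u v : Fin m → ℂ) : ℂ := ∑ a, u a * (starRingEnd ℂ) (v a)

open MeasureTheory Set Filter in
lemma norm_cexp_I_mul' (w : ℂ) (z : ℝ) :
    ‖Complex.exp (Complex.I * w * z)‖ = Real.exp (-w.im * z) := by
  rw [Complex.norm_exp]
  congr 1
  simp [Complex.mul_re, Complex.mul_im]

open MeasureTheory Set Filter in
lemma integrableOn_cexp_I_mul' {w : ℂ} (hw : 0 < w.im) :
    IntegrableOn (fun z : ℝ => Complex.exp (Complex.I * w * z)) (Set.Ioi 0) := by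
  have hint : IntegrableOn (fun z : ℝ => Real.exp (-w.im * z)) (Set.Ioi 0) :=
    exp_neg_integrableOn_Ioi 0 hw
  refine hint.integrable.mono' ?_ ?_
  · exact (Continuous.cexp (by continuity)).aestronglyMeasurable
  · exact Eventually.of_forall fun z => le_of_eq (norm_cexp_I_mul' w z)

open MeasureTheory Set Filter in
lemma integral_cexp_I_mul' {w : ℂ} (hw : 0 < w.im) :
    ∫ z : ℝ in Set.Ioi 0, Complex.exp (Complex.I * w * z) = Complex.I / w := by
  have hw0 : w ≠ 0 := fun h => by simp [h] at hw
  have hIw : Complex.I * w ≠ 0 := mul_ne_zero Complex.I_ne_zero hw0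
  have hd : ∀ x : ℝ, HasDerivAt (fun z : ℝ => Complex.exp (Complex.I * w * z) / (Complex.I * w))
      (Complex.exp (Complex.I * w * x)) x := by
    intro x
    have h0 : HasDerivAt (fun z : ℝ => Complex.I * w * (z : ℂ)) (Complex.I * w) x := by
      simpa using ((hasDerivAt_id x).ofReal_comp).const_mul (Complex.I * w)
    have h1 := (h0.cexp).div_const (Complex.I * w)
    simpa [mul_div_assoc, mul_div_cancel_right₀ _ hIw] using h1
  have htend : Tendsto (fun z : ℝ => Complex.exp (Complex.I * w * z) / (Complex.I * w))
      atTop (nhds 0) := by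
    rw [tendsto_zero_iff_norm_tendsto_zero]
    have : (fun z : ℝ => ‖Complex.exp (Complex.I * w * z) / (Complex.I * w)‖)
        = fun z : ℝ => Real.exp (-w.im * z) / ‖Complex.I * w‖ := by
      funext z; rw [norm_div, norm_cexp_I_mul']
    rw [this]
    have h2 : Tendsto (fun z : ℝ => Real.exp (-w.im * z)) atTop (nhds 0) := by
      apply Real.tendsto_exp_atBot.comp
      exact Tendsto.const_mul_atTop_of_neg (neg_lt_zero.2 hw) tendsto_id
    simpa using h2.div_const ‖Complex.I * w‖
  have := integral_Ioi_of_hasDerivAt_of_tendsto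
    (f := fun z : ℝ => Complex.exp (Complex.I * w * z) / (Complex.I * w))
    (a := 0) ((hd 0).continuousAt.continuousWithinAt)
    (fun x _ => hd x) (integrableOn_cexp_I_mul' hw) htend
  rw [this]
  simp only [Complex.ofReal_zero, mul_zero, Complex.exp_zero, zero_sub]
  field_simp
  rw [Complex.I_sq]

open MeasureTheory Set Filter in
theorem stmt2 {m n : ℕ} (ζ : Fin n → ℂ) (hinj : Function.Injective ζ)
    (him : ∀ j, 0 < (ζ j).im)
    (u : Fin n → Fin m → ℂ) (hu : ∀ j, u j ≠ 0)
    (D : Matrix (Fin n) (Fin n) ℂ)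
    (hD : ∀ j k, D j k = Complex.I / (ζ k - (starRingEnd ℂ) (ζ j)) * herm (u j) (u k)) :
    (∀ y : Fin n → ℂ, y ≠ 0 →
      (∑ j, ∑ k, D j k * y j * (starRingEnd ℂ) (y k)) =
        ((∫ z in Set.Ioi (0:ℝ), ∑ a,
            (‖(∑ j, Complex.exp (-Complex.I * (starRingEnd ℂ) (ζ j) * (z:ℂ)) *
              y j * u j a)‖)^2) : ℂ)) ∧
    (LinearIndependent ℂ (fun j => fun z : Set.Ioi (0:ℝ) => fun a : Fin m =>
        Complex.exp (-Complex.I * (starRingEnd ℂ) (ζ j) * ((z : ℝ) : ℂ)) * u j a) →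
      D.PosDef) := by
  -- frequencies
  set w : Fin n → Fin n → ℂ := fun j k => ζ k - (starRingEnd ℂ) (ζ j) with hw_def
  have hwim : ∀ j k, 0 < (w j k).im := by
    intro j k
    simp only [hw_def, Complex.sub_im, Complex.conj_im]
    have := him j; have := him k; linarith
  -- pointwise identity
  have hpt : ∀ (y : Fin n → ℂ) (z : ℝ),
      (∑ a, ((‖(∑ j, Complex.exp (-Complex.I * (starRingEnd ℂ) (ζ j) * (z:ℂ)) *
          y j * u j a)‖ : ℂ))^2)
      = ∑ j, ∑ k, Complex.exp (Complex.I * w j k * z) *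
          (y j * (starRingEnd ℂ) (y k) * herm (u j) (u k)) := by
    intro y z
    have h1 : ∀ a : Fin m,
        ((‖(∑ j, Complex.exp (-Complex.I * (starRingEnd ℂ) (ζ j) * (z:ℂ)) *
            y j * u j a)‖ : ℂ))^2
        = ∑ j, ∑ k, Complex.exp (Complex.I * w j k * z) *
            (y j * (starRingEnd ℂ) (y k) * (u j a * (starRingEnd ℂ) (u k a))) := by
      intro a
      rw [← Complex.ofReal_pow, Complex.sq_norm, ← Complex.mul_conj, map_sum,
        Finset.sum_mul_sum]
      refine Finset.sum_congr rfl fun j _ => Finset.sum_congr rfl fun k _ => ?_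
      simp only [_root_.map_mul, ← Complex.exp_conj, map_neg, Complex.conj_I, Complex.conj_conj,
        Complex.conj_ofReal]
      have hexp : Complex.exp (-Complex.I * (starRingEnd ℂ) (ζ j) * (z:ℂ)) *
          Complex.exp (-(-Complex.I) * ζ k * (z:ℂ)) = Complex.exp (Complex.I * w j k * z) := by
        rw [← Complex.exp_add]
        congr 1
        simp only [hw_def]
        ring
      linear_combination (y j * (starRingEnd ℂ) (y k) * (u j a * (starRingEnd ℂ) (u k a))) * hexp
    calc ∑ a, ((‖(∑ j, Complex.exp (-Complex.I * (starRingEnd ℂ) (ζ j) * (z:ℂ)) *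
            y j * u j a)‖ : ℂ))^2
        = ∑ a, ∑ j, ∑ k, Complex.exp (Complex.I * w j k * z) *
            (y j * (starRingEnd ℂ) (y k) * (u j a * (starRingEnd ℂ) (u k a))) :=
          Finset.sum_congr rfl fun a _ => h1 a
      _ = ∑ j, ∑ a, ∑ k, Complex.exp (Complex.I * w j k * z) *
            (y j * (starRingEnd ℂ) (y k) * (u j a * (starRingEnd ℂ) (u k a))) :=
          Finset.sum_comm
      _ = ∑ j, ∑ k, Complex.exp (Complex.I * w j k * z) *
            (y j * (starRingEnd ℂ) (y k) * herm (u j) (u k)) := by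
          refine Finset.sum_congr rfl fun j _ => ?_
          rw [Finset.sum_comm]
          refine Finset.sum_congr rfl fun k _ => ?_
          simp only [herm, Finset.mul_sum]
  -- integrability of the complex sum
  have hterm_int : ∀ (y : Fin n → ℂ) (j k : Fin n),
      IntegrableOn (fun z : ℝ => Complex.exp (Complex.I * w j k * z) *
        (y j * (starRingEnd ℂ) (y k) * herm (u j) (u k))) (Set.Ioi 0) :=
    fun y j k => (integrableOn_cexp_I_mul' (hwim j k)).mul_const _
  have hF_int : ∀ (y : Fin n → ℂ),
      IntegrableOn (fun z : ℝ => ∑ j, ∑ k, Complex.exp (Complex.I * w j k * z) *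
        (y j * (starRingEnd ℂ) (y k) * herm (u j) (u k))) (Set.Ioi 0) := by
    intro y
    exact integrable_finset_sum _ fun j _ =>
      integrable_finset_sum _ fun k _ => hterm_int y j k
  -- the key identity, for all y
  have key : ∀ y : Fin n → ℂ,
      (∑ j, ∑ k, D j k * y j * (starRingEnd ℂ) (y k)) =
        ((∫ z in Set.Ioi (0:ℝ), ∑ a,
            (‖(∑ j, Complex.exp (-Complex.I * (starRingEnd ℂ) (ζ j) * (z:ℂ)) *
              y j * u j a)‖)^2) : ℂ) := by
    intro y
    rw [MeasureTheory.integral_congr_ae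
      (g := fun z : ℝ => ∑ j, ∑ k, Complex.exp (Complex.I * w j k * z) *
        (y j * (starRingEnd ℂ) (y k) * herm (u j) (u k)))
      (Eventually.of_forall fun z => hpt y z)]
    rw [integral_finset_sum _ fun j _ =>
      (integrable_finset_sum _ fun k _ => hterm_int y j k)]
    rw [Finset.sum_congr rfl fun j _ => integral_finset_sum _ fun k _ => hterm_int y j k]
    refine Finset.sum_congr rfl fun j _ => Finset.sum_congr rfl fun k _ => ?_
    rw [integral_mul_const, integral_cexp_I_mul' (hwim j k), hD]
    ring
  refine ⟨fun y _ => key y, fun hLI => ?_⟩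
  -- conjugate of herm
  have hconj_herm : ∀ v v' : Fin m → ℂ, (starRingEnd ℂ) (herm v v') = herm v' v := by
    intro v v'
    simp only [herm, map_sum, _root_.map_mul, Complex.conj_conj]
    exact Finset.sum_congr rfl fun a _ => by ring
  have hconjD : ∀ j k, (starRingEnd ℂ) (D j k) = D k j := by
    intro j k
    rw [hD, hD, _root_.map_mul, map_div₀, Complex.conj_I, map_sub, Complex.conj_conj, hconj_herm]
    congr 1
    rw [show ζ j - (starRingEnd ℂ) (ζ k) = -((starRingEnd ℂ) (ζ k) - ζ j) by ring, div_neg,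
      neg_div]
  have hherm : D.IsHermitian := by
    refine Matrix.ext fun i j => ?_
    rw [Matrix.conjTranspose_apply]
    exact hconjD j i
  refine ⟨hherm, fun x hx => ?_⟩
  set y : Fin n → ℂ := fun i => (starRingEnd ℂ) (x i) with hy_def
  have hy : y ≠ 0 := by
    intro h
    apply hx
    ext i
    have : y i = 0 := by rw [h]; rfl
    simpa [hy_def] using this
  -- real integrand
  set g : ℝ → ℝ := fun z => ∑ a, (‖(∑ j,
      Complex.exp (-Complex.I * (starRingEnd ℂ) (ζ j) * (z:ℂ)) * y j * u j a)‖)^2 with hg_def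
  have hg_nonneg : ∀ z, 0 ≤ g z := fun z =>
    Finset.sum_nonneg fun a _ => sq_nonneg _
  have hg_cont : Continuous g := by
    apply continuous_finset_sum
    intro a _
    apply Continuous.pow
    apply continuous_norm.comp
    apply continuous_finset_sum
    intro j _
    exact ((Continuous.cexp (by continuity)).mul continuous_const).mul continuous_const
  have hgc : ∀ z : ℝ, ((g z : ℝ) : ℂ) = ∑ j, ∑ k, Complex.exp (Complex.I * w j k * z) *
      (y j * (starRingEnd ℂ) (y k) * herm (u j) (u k)) := by
    intro z
    rw [← hpt y z]
    simp only [hg_def]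
    push_cast
    rfl
  -- g is integrable on Ioi 0
  have hg_int : IntegrableOn g (Set.Ioi 0) := by
    have h1 := (hF_int y).re
    refine h1.congr (Eventually.of_forall fun z => ?_)
    simp only [RCLike.re_to_complex]
    rw [← hgc z, Complex.ofReal_re]
  -- pick a point where g is positive
  have hex : ∃ z₀ : ℝ, z₀ ∈ Set.Ioi (0:ℝ) ∧ g z₀ ≠ 0 := by
    by_contra h
    push_neg at h
    have hzero : ∀ (z : Set.Ioi (0:ℝ)) (a : Fin m),
        (∑ j, Complex.exp (-Complex.I * (starRingEnd ℂ) (ζ j) * ((z:ℝ):ℂ)) * y j * u j a) = 0 := by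
      intro z a
      have h0 := h z z.2
      have := (Finset.sum_eq_zero_iff_of_nonneg (fun a _ => sq_nonneg
        (‖(∑ j, Complex.exp (-Complex.I * (starRingEnd ℂ) (ζ j) * ((z:ℝ):ℂ)) *
          y j * u j a)‖))).mp h0 a (Finset.mem_univ a)
      have habs := pow_eq_zero_iff (n := 2) (by norm_num) |>.mp this
      exact norm_eq_zero.mp habs
    have hzero' : (∑ j, y j • (fun z : Set.Ioi (0:ℝ) => fun a : Fin m =>
        Complex.exp (-Complex.I * (starRingEnd ℂ) (ζ j) * ((z : ℝ) : ℂ)) * u j a)) = 0 := by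
      funext z; funext a
      simp only [Finset.sum_apply, Pi.smul_apply, smul_eq_mul, Pi.zero_apply]
      rw [← hzero z a]
      exact Finset.sum_congr rfl fun j _ => by ring
    have := Fintype.linearIndependent_iff.mp hLI y (by simpa using hzero')
    exact hy (funext this)
  obtain ⟨z₀, hz₀, hgz₀⟩ := hex
  -- positivity of the integral
  have hpos : 0 < ∫ z in Set.Ioi (0:ℝ), g z := by
    rw [integral_pos_iff_support_of_nonneg_ae (Eventually.of_forall hg_nonneg) hg_int]
    have hopen : IsOpen (Function.support g) := by
      rw [Function.support_eq_preimage]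
      exact hg_cont.isOpen_preimage _ (isOpen_compl_singleton)
    rw [Measure.restrict_apply' measurableSet_Ioi]
    refine (hopen.inter isOpen_Ioi).measure_pos volume ⟨z₀, ?_, hz₀⟩
    exact hgz₀
  -- identify the quadratic form
  have hsd : star x ⬝ᵥ D.mulVec x = ∑ j, ∑ k, D j k * y j * (starRingEnd ℂ) (y k) := by
    simp only [dotProduct, Matrix.mulVec, dotProduct, Pi.star_apply,
      Finset.mul_sum]
    refine Finset.sum_congr rfl fun i _ => Finset.sum_congr rfl fun j _ => ?_
    simp only [hy_def, Complex.conj_conj, RCLike.star_def]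
    ring
  have hcast : ((∫ z in Set.Ioi (0:ℝ), ∑ a,
      (‖(∑ j, Complex.exp (-Complex.I * (starRingEnd ℂ) (ζ j) * (z:ℂ)) *
        y j * u j a)‖)^2) : ℂ) = ((∫ z in Set.Ioi (0:ℝ), g z : ℝ) : ℂ) := by
    rw [show ((∫ z in Set.Ioi (0:ℝ), g z : ℝ) : ℂ)
        = ∫ z in Set.Ioi (0:ℝ), ((g z : ℝ) : ℂ) from (integral_ofReal (𝕜 := ℂ)).symm]
    refine MeasureTheory.integral_congr_ae (Eventually.of_forall fun z => ?_)
    simp only [hg_def]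
    push_cast
    rfl
  have hfinal : star x ⬝ᵥ D.mulVec x = ((∫ z in Set.Ioi (0:ℝ), g z : ℝ) : ℂ) := by
    rw [hsd, key y, hcast]
  rw [show (x.sum fun i xi => x.sum fun j xj => star xi * D i j * xj) = star ⇑x ⬝ᵥ D *ᵥ ⇑x by
    simp [Finsupp.sum_fintype, dotProduct, Matrix.mulVec, Finset.mul_sum, mul_assoc]]
  rw [hfinal]
  exact Complex.zero_lt_real.2 hpos

end
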